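/- For every n-point configuration P_1,...,P_n in R^m there exists epsilon > 0 such that any configuration Q_1,...,Q_n within distance epsilon of (P_1,...,P_n) having the same multiset of squared pairwise distances as P_1,...,P_n lies in the same orbit as P_1,...,P_n under the Euclidean group of R^m. -/

import Mathlib

set_option maxHeartbeats 1000000

/-- The multiset of squared pairwise distances of an `n`-point configuration in `ℝ^m`. -/
noncomputable def sqDistMultiset {n m : ℕ} (P : Fin n → EuclideanSpace ℝ (Fin m)) : Multiset ℝ :=
  ((Finset.univ : Finset (Fin n × Fin n)).filter fun p => p.1 < p.2).val.map
    fun p => dist (P p.1) (P p.2) ^ 2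

open scoped RealInnerProductSpace

noncomputable section

lemma congr_ext {n m : ℕ} (P Q : Fin n → EuclideanSpace ℝ (Fin m))
    (h : ∀ i j, dist (Q i) (Q j) = dist (P i) (P j)) :
    ∃ g : EuclideanSpace ℝ (Fin m) ≃ᵢ EuclideanSpace ℝ (Fin m), ∀ i, Q i = g (P i) := by
  rcases Nat.eq_zero_or_pos n with hn | hn
  · exact ⟨IsometryEquiv.refl _, fun i => absurd i.2 (by omega)⟩
  haveI : NeZero n := ⟨by omega⟩
  let E := EuclideanSpace ℝ (Fin m)
  set v : Fin n → E := fun i => P i - P 0 with hv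
  set w : Fin n → E := fun i => Q i - Q 0 with hw
  have hnorm : ∀ i, ‖w i‖ = ‖v i‖ := fun i => by
    simp only [hv, hw, ← dist_eq_norm]; exact h i 0
  have hnormsub : ∀ i j, ‖w i - w j‖ = ‖v i - v j‖ := fun i j => by
    simp only [hv, hw, sub_sub_sub_cancel_right, ← dist_eq_norm]; exact h i j
  have hinner : ∀ i j, ⟪w i, w j⟫ = ⟪v i, v j⟫ := by
    intro i j
    have h1 := norm_sub_sq_real (w i) (w j)
    have h2 := norm_sub_sq_real (v i) (v j)
    rw [hnorm i, hnorm j, hnormsub i j, h2] at h1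
    linarith
  set T : (Fin n → ℝ) →ₗ[ℝ] E := Fintype.linearCombination ℝ v with hT
  set U : (Fin n → ℝ) →ₗ[ℝ] E := Fintype.linearCombination ℝ w with hU
  have hTa : ∀ c, T c = ∑ i, c i • v i := fun c => Fintype.linearCombination_apply ℝ _ c
  have hUa : ∀ c, U c = ∑ i, c i • w i := fun c => Fintype.linearCombination_apply ℝ _ c
  have hnormTU : ∀ c, ‖U c‖ = ‖T c‖ := by
    intro c
    have key : ⟪U c, U c⟫ = ⟪T c, T c⟫ := by
      rw [hTa, hUa, inner_sum, inner_sum]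
      congr 1; ext j
      rw [sum_inner, sum_inner]
      congr 1; ext i
      rw [real_inner_smul_left, real_inner_smul_left, real_inner_smul_right,
        real_inner_smul_right, hinner]
    have h1 : ‖U c‖ ^ 2 = ‖T c‖ ^ 2 := by
      rw [← real_inner_self_eq_norm_sq, ← real_inner_self_eq_norm_sq, key]
    calc ‖U c‖ = Real.sqrt (‖U c‖^2) := (Real.sqrt_sq (norm_nonneg _)).symm
    _ = Real.sqrt (‖T c‖^2) := by rw [h1]
    _ = ‖T c‖ := Real.sqrt_sq (norm_nonneg _)
  have hker : LinearMap.ker T ≤ LinearMap.ker U := by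
    intro c hc
    rw [LinearMap.mem_ker] at hc ⊢
    have := hnormTU c
    rw [hc, norm_zero, norm_eq_zero] at this
    exact this
  set Lq : ((Fin n → ℝ) ⧸ LinearMap.ker T) →ₗ[ℝ] E := (LinearMap.ker T).liftQ U hker with hLq
  set e := LinearMap.quotKerEquivRange T with he
  set L0 : LinearMap.range T →ₗ[ℝ] E := Lq ∘ₗ e.symm.toLinearMap with hL0
  have hL0a : ∀ c : Fin n → ℝ, ∀ hx, L0 ⟨T c, hx⟩ = U c := by
    intro c hx
    have h1 : e (Submodule.Quotient.mk c) = ⟨T c, hx⟩ := by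
      apply Subtype.ext
      exact LinearMap.quotKerEquivRange_apply_mk T c
    have h2 : e.symm ⟨T c, hx⟩ = Submodule.Quotient.mk c := by
      rw [← h1, LinearEquiv.symm_apply_apply]
    simp only [hL0, LinearMap.comp_apply, LinearEquiv.coe_toLinearMap, h2, hLq]
    exact Submodule.liftQ_apply _ _ _
  set L : LinearMap.range T →ₗᵢ[ℝ] E :=
    { toLinearMap := L0
      norm_map' := by
        rintro ⟨x, hx⟩
        obtain ⟨c, rfl⟩ := LinearMap.mem_range.mp hx
        rw [hL0a c hx, hnormTU]
        rfl } with hL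
  set g0 : E →ₗᵢ[ℝ] E := L.extend with hg0
  set gE : E ≃ₗᵢ[ℝ] E := g0.toLinearIsometryEquiv rfl with hgE
  have hgEa : ∀ x, gE x = g0 x := fun x => g0.toLinearIsometryEquiv_apply rfl x
  have key : ∀ i, gE (v i) = w i := by
    intro i
    have hmem : v i ∈ LinearMap.range T := by
      refine LinearMap.mem_range.mpr ⟨Pi.single i 1, ?_⟩
      rw [show T (Pi.single i 1) = (1:ℝ) • v i from Fintype.linearCombination_apply_single ℝ v i 1]
      simp
    have hTc : T (Pi.single i 1) = v i := by
      rw [show T (Pi.single i 1) = (1:ℝ) • v i from Fintype.linearCombination_apply_single ℝ v i 1]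
      simp
    have : gE (v i) = L ⟨v i, hmem⟩ := by
      rw [hgEa]
      have := L.extend_apply ⟨v i, hmem⟩
      simpa using this
    rw [this]
    have : L ⟨v i, hmem⟩ = L0 ⟨v i, hmem⟩ := rfl
    rw [this]
    have hx : T (Pi.single i 1) ∈ LinearMap.range T := LinearMap.mem_range_self T _
    have := hL0a (Pi.single i 1) hx
    have h2 : L0 ⟨v i, hmem⟩ = U (Pi.single i 1) := by
      have heq : (⟨v i, hmem⟩ : LinearMap.range T) = ⟨T (Pi.single i 1), hx⟩ :=
        Subtype.ext hTc.symm
      rw [heq]; exact hL0a _ hx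
    rw [h2, show U (Pi.single i 1) = (1:ℝ) • w i from Fintype.linearCombination_apply_single ℝ w i 1]
    simp
  refine ⟨((IsometryEquiv.addRight (-(P 0))).trans gE.toIsometryEquiv).trans
    (IsometryEquiv.addRight (Q 0)), fun i => ?_⟩
  simp only [IsometryEquiv.trans_apply, IsometryEquiv.addRight_apply,
    LinearIsometryEquiv.coe_toIsometryEquiv]
  rw [← sub_eq_add_neg, show gE (P i - P 0) = w i from key i]
  simp [hw]

end

theorem stmt10 {n m : ℕ} (P : Fin n → EuclideanSpace ℝ (Fin m)) :
    ∃ ε > 0, ∀ Q : Fin n → EuclideanSpace ℝ (Fin m),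
      dist Q P < ε → sqDistMultiset Q = sqDistMultiset P →
      ∃ g : EuclideanSpace ℝ (Fin m) ≃ᵢ EuclideanSpace ℝ (Fin m),
        ∀ i, Q i = g (P i) := by
  classical
  set pairs : Finset (Fin n × Fin n) := Finset.univ.filter fun p => p.1 < p.2 with hpairs
  set S : Finset ℝ := pairs.image (fun p => dist (P p.1) (P p.2) ^ 2) with hS
  set G : Finset ℝ := ((S ×ˢ S).filter fun q => q.1 ≠ q.2).image (fun q => |q.1 - q.2|) with hG
  set δ : ℝ := if hne : G.Nonempty then G.min' hne else 1 with hδ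
  have hδpos : 0 < δ := by
    rw [hδ]; split_ifs with hne
    · have hm := Finset.min'_mem G hne
      simp only [hG, Finset.mem_image, Finset.mem_filter, Finset.mem_product] at hm
      obtain ⟨⟨a, b⟩, ⟨_, hab⟩, heq⟩ := hm
      rw [← heq]; exact abs_pos.mpr (sub_ne_zero.mpr hab)
    · norm_num
  set C : ℝ := ∑ p ∈ pairs, dist (P p.1) (P p.2) with hC
  have hCp : ∀ p ∈ pairs, dist (P p.1) (P p.2) ≤ C := fun p hp =>
    Finset.single_le_sum (f := fun q : Fin n × Fin n => dist (P q.1) (P q.2)) (fun q _ => dist_nonneg) hp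
  have hC0 : 0 ≤ C := Finset.sum_nonneg fun q _ => dist_nonneg
  refine ⟨min 1 (δ / (4 * C + 5)), by positivity, fun Q hQ hmul => ?_⟩
  have hpair : ∀ p ∈ pairs, dist (Q p.1) (Q p.2) = dist (P p.1) (P p.2) := by
    intro p hp
    have hε1 : dist Q P < 1 := lt_of_lt_of_le hQ (min_le_left _ _)
    have hε2 : dist Q P * (4 * C + 5) < δ := by
      have := lt_of_lt_of_le hQ (min_le_right _ _)
      exact (lt_div_iff₀ (by positivity)).mp this
    have hd0 : (0:ℝ) ≤ dist Q P := dist_nonneg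
    have hclose : |dist (Q p.1) (Q p.2) - dist (P p.1) (P p.2)| ≤ 2 * dist Q P := by
      have h1 := dist_dist_dist_le (Q p.1) (Q p.2) (P p.1) (P p.2)
      rw [Real.dist_eq] at h1
      have hd1 : dist (Q p.1) (P p.1) ≤ dist Q P := dist_le_pi_dist Q P p.1
      have hd2 : dist (Q p.2) (P p.2) ≤ dist Q P := dist_le_pi_dist Q P p.2
      linarith
    have hsq : |dist (Q p.1) (Q p.2) ^ 2 - dist (P p.1) (P p.2) ^ 2| < δ := by
      set x := dist (Q p.1) (Q p.2) with hx
      set y := dist (P p.1) (P p.2) with hy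
      have hy0 : 0 ≤ y := dist_nonneg
      have hx0 : 0 ≤ x := dist_nonneg
      have hyC : y ≤ C := hCp p hp
      have habs : |x ^ 2 - y ^ 2| = |x - y| * (x + y) := by
        rw [show x ^ 2 - y ^ 2 = (x - y) * (x + y) by ring, abs_mul,
          abs_of_nonneg (by linarith : (0:ℝ) ≤ x + y)]
      rw [habs]
      have h1 := abs_le.mp hclose
      have h2 : 0 ≤ |x - y| := abs_nonneg _
      nlinarith
    have hmemQ : dist (Q p.1) (Q p.2) ^ 2 ∈ sqDistMultiset Q := by
      unfold sqDistMultiset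
      exact Multiset.mem_map_of_mem _ (by simpa [hpairs] using hp)
    rw [hmul] at hmemQ
    obtain ⟨q, hq, heq⟩ := Multiset.mem_map.mp hmemQ
    have hq' : q ∈ pairs := by simpa [hpairs] using hq
    by_cases hval : dist (Q p.1) (Q p.2) ^ 2 = dist (P p.1) (P p.2) ^ 2
    · calc dist (Q p.1) (Q p.2) = Real.sqrt (dist (Q p.1) (Q p.2) ^ 2) :=
            (Real.sqrt_sq dist_nonneg).symm
        _ = Real.sqrt (dist (P p.1) (P p.2) ^ 2) := by rw [hval]
        _ = dist (P p.1) (P p.2) := Real.sqrt_sq dist_nonneg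
    · exfalso
      have hA : dist (Q p.1) (Q p.2) ^ 2 ∈ S :=
        Finset.mem_image.mpr ⟨q, hq', heq⟩
      have hB : dist (P p.1) (P p.2) ^ 2 ∈ S :=
        Finset.mem_image.mpr ⟨p, hp, rfl⟩
      have hGmem : |dist (Q p.1) (Q p.2) ^ 2 - dist (P p.1) (P p.2) ^ 2| ∈ G := by
        refine Finset.mem_image.mpr ⟨(dist (Q p.1) (Q p.2) ^ 2, dist (P p.1) (P p.2) ^ 2), ?_, rfl⟩
        exact Finset.mem_filter.mpr ⟨Finset.mem_product.mpr ⟨hA, hB⟩, hval⟩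
      have hle : δ ≤ |dist (Q p.1) (Q p.2) ^ 2 - dist (P p.1) (P p.2) ^ 2| := by
        rw [hδ, dif_pos ⟨_, hGmem⟩]
        exact Finset.min'_le _ _ hGmem
      linarith
  have hd : ∀ i j, dist (Q i) (Q j) = dist (P i) (P j) := by
    intro i j
    rcases lt_trichotomy i j with hij | rfl | hij
    · exact hpair (i, j) (by simp [hpairs, hij])
    · simp
    · rw [dist_comm, dist_comm (P i)]
      exact hpair (j, i) (by simp [hpairs, hij])
  exact congr_ext P Q hd
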